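/- Let I ⊆ ℝ be an open interval and f, g : I → ℝ smooth with f > 0, g > 0 and g' > 0 on I. Let l₁ ∈ ℝ, l₂ ≠ 0, l₃ ≠ 0, and define T(t,x) = t + l₁·g(x)², X̃(t,x) = 2l₂·g(x), Ũ(t,x,u) = l₃·u·√(f(x)·g'(x)³/g(x)) on ℝ × I × ℝ. Then at every point: X₁(T) = 1, X₁(X̃) = 0, X₁(Ũ) = 0; X₂(T) = 0, X₂(X̃) = 0, X₂(Ũ) = Ũ; X₃(T) = 4T, X₃(X̃) = 2X̃, X₃(Ũ) = −Ũ. Hence the change of variables maps X₁, X₂, X₃ to ∂_T, U∂_U, 4T∂_T + 2X∂_X − U∂_U respectively. -/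

import Mathlib

/-- The operator `X₁F = ∂F/∂t`. -/
noncomputable def X1 (F : ℝ → ℝ → ℝ → ℝ) (t x u : ℝ) : ℝ :=
  deriv (fun s => F s x u) t

/-- The operator `X₂F = u·∂F/∂u`. -/
noncomputable def X2 (F : ℝ → ℝ → ℝ → ℝ) (t x u : ℝ) : ℝ :=
  u * deriv (fun v => F t x v) u

/-- The operator `X₃F = 4t·F_t + (2g/g')·F_x − (f'g/(fg') + 3g·g''/g'²)·u·F_u`. -/
noncomputable def X3 (f g : ℝ → ℝ) (F : ℝ → ℝ → ℝ → ℝ) (t x u : ℝ) : ℝ :=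
  4 * t * deriv (fun s => F s x u) t
    + (2 * g x / deriv g x) * deriv (fun y => F t y u) x
    - (deriv f x * g x / (f x * deriv g x)
        + 3 * g x * (deriv^[2] g x) / (deriv g x)^2) * u * deriv (fun v => F t x v) u

/-- The operator `X₄F = (2/g')·F_x − (f'/(fg') + 3g''/g'²)·u·F_u`. -/
noncomputable def X4 (f g : ℝ → ℝ) (F : ℝ → ℝ → ℝ → ℝ) (t x u : ℝ) : ℝ :=
  (2 / deriv g x) * deriv (fun y => F t y u) x
    - (deriv f x / (f x * deriv g x)
        + 3 * (deriv^[2] g x) / (deriv g x)^2) * u * deriv (fun v => F t x v) u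

/-- the change of variables `T = t + l₁·g²`, `X̃ = 2l₂·g`,
`Ũ = l₃·u·√(f·g'³/g)` maps `X₁, X₂, X₃` to `∂_T, U∂_U, 4T∂_T + 2X∂_X − U∂_U`
respectively. -/
theorem statement2
    (I : Set ℝ) (hIopen : IsOpen I) (hIinterval : I.OrdConnected)
    (f g : ℝ → ℝ)
    (hf : ContDiffOn ℝ (⊤ : ℕ∞) f I) (hg : ContDiffOn ℝ (⊤ : ℕ∞) g I)
    (hfpos : ∀ x ∈ I, 0 < f x) (hgpos : ∀ x ∈ I, 0 < g x)
    (hg' : ∀ x ∈ I, 0 < deriv g x)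
    (l₁ l₂ l₃ : ℝ) (hl₂ : l₂ ≠ 0) (hl₃ : l₃ ≠ 0)
    (T Xt Ut : ℝ → ℝ → ℝ → ℝ)
    (hT : T = fun t x _ => t + l₁ * (g x)^2)
    (hXt : Xt = fun _ x _ => 2 * l₂ * g x)
    (hUt : Ut = fun _ x u => l₃ * u * Real.sqrt (f x * (deriv g x)^3 / g x)) :
    ∀ t : ℝ, ∀ x ∈ I, ∀ u : ℝ,
      X1 T t x u = 1 ∧ X1 Xt t x u = 0 ∧ X1 Ut t x u = 0 ∧
      X2 T t x u = 0 ∧ X2 Xt t x u = 0 ∧ X2 Ut t x u = Ut t x u ∧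
      X3 f g T t x u = 4 * T t x u ∧
      X3 f g Xt t x u = 2 * Xt t x u ∧
      X3 f g Ut t x u = -Ut t x u := by
  intro t x hx u
  subst hT hXt hUt
  have hxnhds : I ∈ nhds x := hIopen.mem_nhds hx
  have hgd : DifferentiableAt ℝ g x :=
    ((hg.differentiableOn (by simp)).differentiableAt hxnhds)
  have hfd : DifferentiableAt ℝ f x :=
    ((hf.differentiableOn (by simp)).differentiableAt hxnhds)
  have hdg : ContDiffOn ℝ (⊤ : ℕ∞) (deriv g) I := hg.deriv_of_isOpen hIopen (by simp)
  have hg'd : DifferentiableAt ℝ (deriv g) x :=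
    ((hdg.differentiableOn (by simp)).differentiableAt hxnhds)
  have ha : 0 < f x := hfpos x hx
  have hb : 0 < g x := hgpos x hx
  have hc : 0 < deriv g x := hg' x hx
  have hit : deriv^[2] g x = deriv (deriv g) x := rfl
  set a := f x with ha'
  set b := g x with hb'
  set c := deriv g x with hc'
  set a' := deriv f x
  set c' := deriv (deriv g) x
  have hψpos : 0 < a * c ^ 3 / b := by positivity
  set s := Real.sqrt (a * c ^ 3 / b) with hs
  have hspos : 0 < s := Real.sqrt_pos.mpr hψpos
  have hs2 : s ^ 2 = a * c ^ 3 / b := Real.sq_sqrt hψpos.le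
  -- derivative of ψ = f * (deriv g)^3 / g
  have hψ : HasDerivAt (fun y => f y * (deriv g y) ^ 3 / g y)
      (((a' * c ^ 3 + a * (3 * c ^ 2 * c')) * b - a * c ^ 3 * c) / b ^ 2) x := by
    have h1 : HasDerivAt (fun y => f y * (deriv g y) ^ 3)
        (a' * c ^ 3 + a * (3 * c ^ 2 * c')) x := by
      have := hfd.hasDerivAt.mul ((hg'd.hasDerivAt.pow 3))
      exact this.congr_deriv (by rw [Pi.pow_apply]; norm_num; rfl)
    exact h1.div hgd.hasDerivAt hb.ne'
  have hsd : HasDerivAt (fun y => Real.sqrt (f y * (deriv g y) ^ 3 / g y))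
      ((((a' * c ^ 3 + a * (3 * c ^ 2 * c')) * b - a * c ^ 3 * c) / b ^ 2) / (2 * s)) x :=
    hψ.sqrt hψpos.ne'
  -- x-derivatives
  have dT_x : deriv (fun y => t + l₁ * (g y) ^ 2) x = l₁ * (2 * b * c) := by
    have h : HasDerivAt (fun y => t + l₁ * (g y) ^ 2) (l₁ * (2 * b * c)) x := by
      have := (hasDerivAt_const x t).add (((hgd.hasDerivAt.pow 2)).const_mul l₁)
      exact this.congr_deriv (by
        rw [hb', hc']; simp only [zero_add, Nat.cast_ofNat, show (2:ℕ) - 1 = 1 from rfl, pow_one])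
    exact h.deriv
  have dX_x : deriv (fun y => 2 * l₂ * g y) x = 2 * l₂ * c := by
    have h : HasDerivAt (fun y => 2 * l₂ * g y) (2 * l₂ * c) x := by
      simpa [mul_comm, mul_assoc, mul_left_comm] using hgd.hasDerivAt.const_mul (2 * l₂)
    exact h.deriv
  have dU_x : deriv (fun y => l₃ * u * Real.sqrt (f y * (deriv g y) ^ 3 / g y)) x
      = l₃ * u * ((((a' * c ^ 3 + a * (3 * c ^ 2 * c')) * b - a * c ^ 3 * c) / b ^ 2) / (2 * s)) := by
    exact (hsd.const_mul (l₃ * u)).deriv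
  -- u-derivative of Ut
  have dU_u : deriv (fun v => l₃ * v * s) u = l₃ * s := by
    have h : HasDerivAt (fun v => l₃ * v * s) (l₃ * s) u := by
      simpa using (((hasDerivAt_id u).const_mul l₃).mul_const s)
    exact h.deriv
  have key : (2 * b / c) * (l₃ * u * ((((a' * c ^ 3 + a * (3 * c ^ 2 * c')) * b - a * c ^ 3 * c) / b ^ 2) / (2 * s)))
      - (a' * b / (a * c) + 3 * b * c' / c ^ 2) * u * (l₃ * s) = -(l₃ * u * s) := by
    have hbne : b ≠ 0 := hb.ne'
    have hcne : c ≠ 0 := hc.ne'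
    have hane : a ≠ 0 := ha.ne'
    have hsne : s ≠ 0 := hspos.ne'
    have hs2' : s ^ 2 * b = a * c ^ 3 := by
      rw [hs2]; field_simp
    have hinv : 1 / s = s * b / (a * c ^ 3) := by
      rw [div_eq_div_iff hsne (mul_pos ha (pow_pos hc 3)).ne']
      linear_combination -1 * hs2'
    have e : ((a' * c ^ 3 + a * (3 * c ^ 2 * c')) * b - a * c ^ 3 * c) / b ^ 2 / (2 * s)
        = ((a' * c ^ 3 + a * (3 * c ^ 2 * c')) * b - a * c ^ 3 * c) / b ^ 2 / 2 * (1 / s) := by ring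
    rw [e, hinv]
    field_simp
    ring
  refine ⟨?_, ?_, ?_, ?_, ?_, ?_, ?_, ?_, ?_⟩
  · simp [X1]
  · simp [X1]
  · simp [X1]
  · simp [X2]
  · simp [X2]
  · simp only [X2, ← hs]
    rw [dU_u]; ring
  · simp only [X3, hit, deriv_const, dT_x, ← ha', ← hb', ← hc']
    have : deriv (fun s => s + l₁ * b ^ 2) t = 1 := by
      simpa using ((hasDerivAt_id t).add_const (l₁ * b ^ 2)).deriv
    rw [this]
    field_simp
    ring
  · simp only [X3, hit, deriv_const, dX_x, ← hb', ← hc']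
    field_simp
    ring
  · simp only [X3, hit, ← hs, dU_x, dU_u, deriv_const, ← ha', ← hb', ← hc']
    simpa using key
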